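/- arXiv:2506.10872 — 3 statements merged into one kernel-verified Lean document; each statement's English description precedes it below -/
import Mathlib

section
/- Let v₁ and v₂ be independent random variables, where v₁ takes the value 14 with probability 1/2 and 0 with probability 1/2, and v₂ takes the value 18 with probability 1/5 and 0 with probability 4/5. Then E[1(v₁ = 14)·14 + 1(v₁ = 0)·(max(v₂, 10) − 1)] − 1 = 113/10 and E[1(v₂ = 18)·18 + 1(v₂ = 0)·(max(v₁, 10) − 1)] − 1 = 114/10; in particular the second quantity strictly exceeds the first. These are the expected values, in the three-box Pandora's box instance with both opening costs equal to 1 and an already-open box of value 10, of the policy P1 that first opens box 1 and opens box 2 only if the revealed reward is 0, and of the policy P2 that first opens box 2 and opens box 1 only if the revealed reward is 0; hence the one-step-lookahead policy P1 is strictly outperformed by P2. -/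
open MeasureTheory

/-!
STATEMENT 5: With `v₁, v₂` independent, `v₁ = 14` w.p. `1/2` and `0` w.p. `1/2`,
`v₂ = 18` w.p. `1/5` and `0` w.p. `4/5`, the value of policy P1 (open box 1 first, in the
three-box instance with both opening costs 1 and an open box of value 10) is
`E[1(v₁ = 14)·14 + 1(v₁ = 0)·(max(v₂,10) − 1)] − 1 = 113/10`, the value of policy P2 is
`E[1(v₂ = 18)·18 + 1(v₂ = 0)·(max(v₁,10) − 1)] − 1 = 114/10`, and the latter strictly
exceeds the former: one-step lookahead (P1) is strictly outperformed by P2.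
-/
lemma stmt5_ae {Ω : Type*} [MeasurableSpace Ω] (μ : Measure Ω) [IsProbabilityMeasure μ]
    (f : Ω → ℝ) (hf : Measurable f) (A : ℝ) (hA : A ≠ 0) (pA q : ENNReal)
    (hfA : μ {ω | f ω = A} = pA) (hf0 : μ {ω | f ω = 0} = q) (hsum : pA + q = 1) :
    ∀ᵐ ω ∂μ, f ω = A ∨ f ω = 0 := by
  have msA : MeasurableSet {ω | f ω = A} := hf (measurableSet_singleton A)
  have ms0 : MeasurableSet {ω | f ω = 0} := hf (measurableSet_singleton 0)
  have hd : Disjoint {ω | f ω = A} {ω | f ω = 0} := by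
    rw [Set.disjoint_left]
    rintro ω hωA hω0
    simp only [Set.mem_setOf_eq] at hωA hω0
    exact hA (hωA ▸ hω0)
  have hu : μ ({ω | f ω = A} ∪ {ω | f ω = 0}) = 1 := by
    rw [measure_union hd ms0, hfA, hf0, hsum]
  have hc : μ ({ω | f ω = A} ∪ {ω | f ω = 0})ᶜ = 0 := by
    rw [measure_compl (msA.union ms0) (measure_ne_top μ _), hu, measure_univ, tsub_self]
  filter_upwards [measure_eq_zero_iff_ae_notMem.mp hc] with ω hω
  rw [Set.mem_compl_iff, not_not] at hω; exact hω

lemma stmt5_aux {Ω : Type*} [MeasurableSpace Ω] (μ : Measure Ω) [IsProbabilityMeasure μ]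
    (f g : Ω → ℝ) (hf : Measurable f) (hg : Measurable g)
    (hind : ProbabilityTheory.IndepFun f g μ) (A B : ℝ) (hA : A ≠ 0) (hB : (10:ℝ) ≤ B)
    (pA q pB qB : ENNReal) (hfA : μ {ω | f ω = A} = pA) (hf0 : μ {ω | f ω = 0} = q)
    (hgB : μ {ω | g ω = B} = pB) (hg0 : μ {ω | g ω = 0} = qB)
    (hsum : pA + q = 1) (hsumg : pB + qB = 1) :
    ∫ ω, ((if f ω = A then A else 0) + (if f ω = 0 then max (g ω) 10 - 1 else 0)) ∂μ
      = A * pA.toReal + 9 * q.toReal + (B - 10) * (q * pB).toReal := by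
  have hB0 : B ≠ 0 := by linarith
  have msA : MeasurableSet {ω | f ω = A} := hf (measurableSet_singleton A)
  have ms0 : MeasurableSet {ω | f ω = 0} := hf (measurableSet_singleton 0)
  have msB : MeasurableSet {ω | g ω = B} := hg (measurableSet_singleton B)
  have haef := stmt5_ae μ f hf A hA pA q hfA hf0 hsum
  have haeg := stmt5_ae μ g hg B hB0 pB qB hgB hg0 hsumg
  have hmi : μ ({ω | f ω = 0} ∩ {ω | g ω = B}) = q * pB := by
    have := hind.measure_inter_preimage_eq_mul {(0:ℝ)} {B}
      (measurableSet_singleton 0) (measurableSet_singleton B)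
    simpa [Set.preimage, hf0, hgB] using this
  have heq : (fun ω => (if f ω = A then A else 0) + (if f ω = 0 then max (g ω) 10 - 1 else 0))
      =ᵐ[μ] fun ω =>
        Set.indicator {ω | f ω = A} (fun _ => A) ω
        + Set.indicator {ω | f ω = 0} (fun _ => (9:ℝ)) ω
        + Set.indicator ({ω | f ω = 0} ∩ {ω | g ω = B}) (fun _ => B - 10) ω := by
    filter_upwards [haef, haeg] with ω hωf hωg
    rcases hωf with hfa | hf0'
    · have hne : f ω ≠ 0 := hfa ▸ hA
      simp [Set.indicator_apply, hfa, hne, hA]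
    · have hne : f ω ≠ A := by rw [hf0']; exact fun h => hA h.symm
      rcases hωg with hgb | hg0'
      · simp only [Set.indicator_apply, Set.mem_inter_iff, Set.mem_setOf_eq, hf0', hne, hgb,
          if_true, if_false, if_neg (Ne.symm hA), max_eq_left hB, and_self]
        ring
      · have hgne : g ω ≠ B := by rw [hg0']; exact fun h => hB0 h.symm
        simp only [Set.indicator_apply, Set.mem_inter_iff, Set.mem_setOf_eq, hf0', hne, hg0',
          hgne, if_true, if_false, if_neg (Ne.symm hA), and_false]
        norm_num
        exact fun h => absurd h (Ne.symm hB0)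
  rw [integral_congr_ae heq]
  have iA : Integrable (Set.indicator {ω | f ω = A} (fun _ => A)) μ :=
    (integrable_const A).indicator msA
  have i0 : Integrable (Set.indicator {ω | f ω = 0} (fun _ => (9:ℝ))) μ :=
    (integrable_const _).indicator ms0
  have iB : Integrable (Set.indicator ({ω | f ω = 0} ∩ {ω | g ω = B}) (fun _ => B - 10)) μ :=
    (integrable_const _).indicator (ms0.inter msB)
  have i12 : Integrable (fun a => Set.indicator {ω | f ω = A} (fun _ => A) a
      + Set.indicator {ω | f ω = 0} (fun _ => (9:ℝ)) a) μ := iA.add i0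
  rw [integral_add i12 iB, integral_add iA i0,
    integral_indicator_const _ msA, integral_indicator_const _ ms0,
    integral_indicator_const _ (ms0.inter msB), measureReal_def, measureReal_def,
    measureReal_def, hfA, hf0, hmi]
  simp [mul_comm]

theorem stmt5 {Ω : Type*} [MeasurableSpace Ω] (μ : Measure Ω) [IsProbabilityMeasure μ]
    (v₁ v₂ : Ω → ℝ) (h₁ : Measurable v₁) (h₂ : Measurable v₂)
    (hind : ProbabilityTheory.IndepFun v₁ v₂ μ)
    (hv₁a : μ {ω | v₁ ω = 14} = 1/2) (hv₁b : μ {ω | v₁ ω = 0} = 1/2)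
    (hv₂a : μ {ω | v₂ ω = 18} = 1/5) (hv₂b : μ {ω | v₂ ω = 0} = 4/5) :
    ((∫ ω, ((if v₁ ω = 14 then (14 : ℝ) else 0)
        + (if v₁ ω = 0 then max (v₂ ω) 10 - 1 else 0)) ∂μ) - 1 = 113/10) ∧
    ((∫ ω, ((if v₂ ω = 18 then (18 : ℝ) else 0)
        + (if v₂ ω = 0 then max (v₁ ω) 10 - 1 else 0)) ∂μ) - 1 = 114/10) ∧
    ((113 : ℝ)/10 < 114/10) := by
  have hs1 : (1/2 : ENNReal) + 1/2 = 1 := by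
    rw [ENNReal.div_add_div_same]; norm_num; rw [ENNReal.div_self] <;> norm_num
  have hs2 : (1/5 : ENNReal) + 4/5 = 1 := by
    rw [ENNReal.div_add_div_same]; norm_num; rw [ENNReal.div_self] <;> norm_num
  have e1 := stmt5_aux μ v₁ v₂ h₁ h₂ hind 14 18 (by norm_num) (by norm_num)
    (1/2) (1/2) (1/5) (4/5) hv₁a hv₁b hv₂a hv₂b hs1 hs2
  have e2 := stmt5_aux μ v₂ v₁ h₂ h₁ hind.symm 18 14 (by norm_num) (by norm_num)
    (1/5) (4/5) (1/2) (1/2) hv₂a hv₂b hv₁a hv₁b hs2 hs1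
  rw [e1, e2]
  norm_num [ENNReal.toReal_div, ENNReal.toReal_mul]
end

section
/- Let μ, α ∈ ℝ and σ > 0, and let X be a Gaussian random variable with mean μ and variance σ². Then E[max(X − α, 0)] = (μ − α)·Φ((μ − α)/σ) + σ·φ((μ − α)/σ), where φ and Φ denote the standard normal probability density function and cumulative distribution function, respectively. -/
open MeasureTheory

/-- The standard normal probability density function `φ`. -/
noncomputable def stdGaussianPDF (z : ℝ) : ℝ :=
  (Real.sqrt (2 * Real.pi))⁻¹ * Real.exp (-(z ^ 2) / 2)

/-- The standard normal cumulative distribution function `Φ`. -/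
noncomputable def stdGaussianCDF (z : ℝ) : ℝ :=
  ∫ u in Set.Iic z, stdGaussianPDF u

/-!
STATEMENT 6: If `X` is Gaussian with mean `μ` and variance `σ²` (`σ > 0`), then for every
`α`, `E[max (X − α) 0] = (μ − α)·Φ((μ − α)/σ) + σ·φ((μ − α)/σ)`.
-/
open Real Set Filter
open scoped NNReal ENNReal

lemma stdPDF_eq (z : ℝ) : stdGaussianPDF z = ProbabilityTheory.gaussianPDFReal 0 1 z := by
  simp [stdGaussianPDF, ProbabilityTheory.gaussianPDFReal]

lemma stdPDF_even (z : ℝ) : stdGaussianPDF (-z) = stdGaussianPDF z := by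
  simp [stdGaussianPDF, neg_pow]

lemma stdPDF_nonneg (z : ℝ) : 0 ≤ stdGaussianPDF z :=
  mul_nonneg (inv_nonneg.2 (Real.sqrt_nonneg _)) (Real.exp_nonneg _)

lemma integrable_stdPDF : Integrable stdGaussianPDF := by
  have h := (integrable_exp_neg_mul_sq (by norm_num : (0:ℝ) < 1/2)).const_mul
    (Real.sqrt (2 * Real.pi))⁻¹
  refine h.congr (Filter.Eventually.of_forall fun z => ?_)
  unfold stdGaussianPDF; ring_nf

lemma integrable_mul_stdPDF : Integrable (fun z => z * stdGaussianPDF z) := by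
  have h := (integrable_mul_exp_neg_mul_sq (by norm_num : (0:ℝ) < 1/2)).const_mul
    (Real.sqrt (2 * Real.pi))⁻¹
  refine h.congr (Filter.Eventually.of_forall fun z => ?_)
  unfold stdGaussianPDF; ring_nf

lemma hasDeriv_negPDF (x : ℝ) :
    HasDerivAt (fun z => -stdGaussianPDF z) (x * stdGaussianPDF x) x := by
  have h1 : HasDerivAt (fun z : ℝ => -(z^2)/2) (-x) x := by
    have h := ((hasDerivAt_pow 2 x).neg.div_const 2)
    simpa [neg_div] using h.congr_deriv (by ring)
  have h2 := (h1.exp.const_mul (Real.sqrt (2 * Real.pi))⁻¹).neg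
  refine h2.congr_deriv ?_
  unfold stdGaussianPDF; ring

lemma tendsto_negPDF : Tendsto (fun z => -stdGaussianPDF z) atTop (nhds 0) := by
  have h1 : Tendsto (fun z : ℝ => -(z^2)/2) atTop atBot := by
    have h := tendsto_neg_atBot_iff (α := ℝ) |>.mpr ((tendsto_pow_atTop (two_ne_zero)).atTop_div_const (by norm_num : (0:ℝ) < 2))
    refine h.congr fun z => by ring
  have h2 := (Real.tendsto_exp_atBot.comp h1).const_mul (Real.sqrt (2 * Real.pi))⁻¹
  simpa [stdGaussianPDF, Function.comp] using h2.neg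

lemma int_mul_Ioi (a : ℝ) : ∫ z in Ioi a, z * stdGaussianPDF z = stdGaussianPDF a := by
  have := integral_Ioi_of_hasDerivAt_of_tendsto' (a := a) (f := fun z => -stdGaussianPDF z)
    (fun x _ => hasDeriv_negPDF x) integrable_mul_stdPDF.integrableOn tendsto_negPDF
  simpa using this

lemma int_pdf_Ioi (a : ℝ) : ∫ z in Ioi a, stdGaussianPDF z = stdGaussianCDF (-a) := by
  rw [show a = -(-a) from (neg_neg a).symm, ← integral_comp_neg_Iic]
  simp_rw [stdPDF_even, neg_neg]
  rfl

lemma key_int (c : ℝ) :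
    ∫ z, max (z + c) 0 * stdGaussianPDF z = c * stdGaussianCDF c + stdGaussianPDF c := by
  have hind : (fun z => max (z + c) 0 * stdGaussianPDF z)
      = Set.indicator (Ici (-c)) (fun z => (z + c) * stdGaussianPDF z) := by
    funext z
    by_cases h : -c ≤ z
    · rw [Set.indicator_of_mem (Set.mem_Ici.mpr h),
        max_eq_left (by linarith : (0:ℝ) ≤ z + c)]
    · rw [Set.indicator_of_notMem (by simpa using h),
        max_eq_right (by push_neg at h; linarith : z + c ≤ (0:ℝ)), zero_mul]
  rw [hind, integral_indicator measurableSet_Ici, integral_Ici_eq_integral_Ioi]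
  have hsplit : ∫ z in Ioi (-c), (z + c) * stdGaussianPDF z
      = (∫ z in Ioi (-c), z * stdGaussianPDF z) + ∫ z in Ioi (-c), c * stdGaussianPDF z := by
    rw [← integral_add integrable_mul_stdPDF.integrableOn
      ((integrable_stdPDF.const_mul c).integrableOn)]
    congr 1 with z; ring
  rw [hsplit, int_mul_Ioi, integral_const_mul, int_pdf_Ioi, neg_neg, stdPDF_even]
  ring

theorem stmt6 {Ω : Type*} [MeasurableSpace Ω] (P : Measure Ω) [IsProbabilityMeasure P]
    (X : Ω → ℝ) (hX : Measurable X) (m α σ : ℝ) (hσ : 0 < σ)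
    (hlaw : P.map X = ProbabilityTheory.gaussianReal m (Real.toNNReal (σ ^ 2))) :
    ∫ ω, max (X ω - α) 0 ∂P
      = (m - α) * stdGaussianCDF ((m - α) / σ) + σ * stdGaussianPDF ((m - α) / σ) := by
  set c : ℝ := (m - α) / σ with hc
  have hσc : σ * c = m - α := by
    rw [hc, mul_div_assoc', mul_comm, mul_div_assoc, div_self hσ.ne', mul_one]
  set v : ℝ≥0 := Real.toNNReal (σ^2) with hv
  have hf : Continuous (fun x : ℝ => max (x - α) 0) :=
    (continuous_id.sub continuous_const).max continuous_const
  -- step A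
  have hA : ∫ ω, max (X ω - α) 0 ∂P
      = ∫ x, max (x - α) 0 ∂(ProbabilityTheory.gaussianReal m v) := by
    rw [← hlaw, integral_map hX.aemeasurable hf.aestronglyMeasurable]
  -- step B
  have hB : ProbabilityTheory.gaussianReal m v
      = (ProbabilityTheory.gaussianReal 0 1).map (fun z => σ * z + m) := by
    have h1 : (ProbabilityTheory.gaussianReal 0 1).map (σ * ·)
        = ProbabilityTheory.gaussianReal (σ * 0) (.mk (σ^2) (sq_nonneg σ) * 1) :=
      ProbabilityTheory.gaussianReal_map_const_mul σ
    have h2 : ((.mk (σ^2) (sq_nonneg σ) : ℝ≥0) * 1) = v := by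
      ext; simp [hv, Real.coe_toNNReal _ (sq_nonneg σ)]
    have h3 : ((ProbabilityTheory.gaussianReal 0 1).map (σ * ·)).map (· + m)
        = ProbabilityTheory.gaussianReal (0 + m) v := by
      rw [h1, h2, mul_zero]
      exact ProbabilityTheory.gaussianReal_map_add_const m
    rw [zero_add] at h3
    rw [← h3, Measure.map_map (measurable_add_const m) (measurable_const_mul σ)]
    rfl
  -- step C
  have hC : ∫ x, max (x - α) 0 ∂(ProbabilityTheory.gaussianReal m v)
      = ∫ z, max (σ * z + m - α) 0 ∂(ProbabilityTheory.gaussianReal 0 1) := by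
    rw [hB, integral_map ((measurable_id'.const_mul σ).add_const m).aemeasurable
      hf.aestronglyMeasurable]
  -- step D
  have hD : ∫ z, max (σ * z + m - α) 0 ∂(ProbabilityTheory.gaussianReal 0 1)
      = ∫ z, stdGaussianPDF z * max (σ * z + m - α) 0 := by
    rw [ProbabilityTheory.gaussianReal_of_var_ne_zero 0 one_ne_zero]
    have : ProbabilityTheory.gaussianPDF 0 1
        = fun x => ((ProbabilityTheory.gaussianPDFReal 0 1 x).toNNReal : ℝ≥0∞) := rfl
    rw [this, integral_withDensity_eq_integral_smul
      ((ProbabilityTheory.measurable_gaussianPDFReal 0 1).real_toNNReal)]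
    congr 1 with z
    rw [NNReal.smul_def, Real.coe_toNNReal _ (ProbabilityTheory.gaussianPDFReal_nonneg 0 1 z),
      ← stdPDF_eq, smul_eq_mul]
  -- step E
  have hE : (fun z => stdGaussianPDF z * max (σ * z + m - α) 0)
      = fun z => σ * (max (z + c) 0 * stdGaussianPDF z) := by
    funext z
    have h4 : σ * z + m - α = σ * (z + c) := by rw [mul_add, hσc]; ring
    have h5 : σ * max (z + c) 0 = max (σ * (z + c)) 0 := by
      rw [mul_max_of_nonneg _ _ hσ.le, mul_zero]
    rw [h4, ← h5]
    ring
  rw [hA, hC, hD, hE, integral_const_mul, key_int, mul_add, ← mul_assoc, hσc]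
end

section
/- For every state s of a Markov chain with rewards satisfying the finite-termination and integrability assumption, the map α ↦ V*(s; α) is convex and nondecreasing on ℝ; it satisfies 0 ≤ V*(s; β) − V*(s; α) ≤ β − α whenever α ≤ β, so its one-sided derivatives exist everywhere and take values in [0,1]; and it satisfies V*(s; α) ≥ α for all α ∈ ℝ. -/
open MeasureTheory
open scoped Classical ENNReal

noncomputable section

/-- The hitting time of the set `A` along the path `ω`, valued in `ℕ∞`. -/
def hitTime {S : Type*} (A : Set S) (ω : ℕ → S) : ℕ∞ :=
  ⨅ t : {t : ℕ // ω t ∈ A}, (t.1 : ℕ∞)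

/-- A Markov chain with rewards (Definition 2.1 of the paper), bundled with its canonical
trajectory measures, in the undiscounted setting, satisfying the finite-termination and
integrability assumption: a measurable set `term` of terminal states, a Markov transition
kernel `p` for which terminal states are absorbing, a measurable reward function `r`
vanishing on terminal states, and for each starting state `s` the law `traj s` of the
canonical trajectory `(X_t)` with `X_0 = s` and `X_{t+1} ~ p (X_t)` (characterized by the
one-step Markov property `traj_markov`); from every starting state the terminal set is hit
in finite time almost surely, and the pre-termination rewards are absolutely integrable. -/
structure MC (S : Type*) [MeasurableSpace S] where
  term : Set S
  term_meas : MeasurableSet term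
  p : S → Measure S
  p_meas : Measurable p
  p_prob : ∀ s, IsProbabilityMeasure (p s)
  r : S → ℝ
  r_meas : Measurable r
  r_term : ∀ s ∈ term, r s = 0
  absorbing : ∀ s ∈ term, p s = Measure.dirac s
  traj : S → Measure (ℕ → S)
  traj_meas : Measurable traj
  traj_prob : ∀ s, IsProbabilityMeasure (traj s)
  traj_zero : ∀ s, ∀ᵐ ω ∂ traj s, ω 0 = s
  traj_markov : ∀ s, (traj s).map (fun ω n => ω (n + 1)) = (p s).bind traj
  hit_fin : ∀ s, ∀ᵐ ω ∂ traj s, hitTime term ω < ⊤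
  rwd_int : ∀ s, (∫⁻ ω, ∑' t : ℕ,
    (if (t : ℕ∞) < hitTime term ω then ENNReal.ofReal |r (ω t)| else 0) ∂ traj s) < ⊤

namespace MC

variable {S : Type*} [MeasurableSpace S]

/-- The σ-algebra of events on path space observable by time `n`
(the natural filtration of the coordinate process). -/
def cyl (S : Type*) [MeasurableSpace S] (n : ℕ) : MeasurableSpace (ℕ → S) :=
  MeasurableSpace.comap (fun (ω : ℕ → S) (i : Fin (n + 1)) => ω i) inferInstance

/-- `τ` is a stopping time of the natural filtration of the coordinate process. -/
def IsStopping (S : Type*) [MeasurableSpace S] (τ : (ℕ → S) → ℕ∞) : Prop :=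
  ∀ n : ℕ, MeasurableSet[cyl S n] {ω | τ ω ≤ (n : ℕ∞)}

/-- The payoff, in the `α`-local MDP, of the stopping time `τ` along the path `ω`:
the rewards collected before stopping, plus `α` if `τ` ever stops. -/
def payoff (M : MC S) (α : ℝ) (τ : (ℕ → S) → ℕ∞) (ω : ℕ → S) : ℝ :=
  (∑' t : ℕ, if (t : ℕ∞) < τ ω then M.r (ω t) else 0)
    + α * (if τ ω < ⊤ then 1 else 0)

/-- The local-MDP value function `V*(s; α)`: the supremum, over stopping times `τ` of the
natural filtration, of the expected payoff. -/
def val (M : MC S) (s : S) (α : ℝ) : ℝ :=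
  ⨆ τ : {τ : (ℕ → S) → ℕ∞ // IsStopping S τ}, ∫ ω, M.payoff α τ.1 ω ∂ M.traj s

/-- The Gittins index `G(s) = inf {α | V*(s; α) = α}`, real-valued
(with the junk value `sInf ∅ = 0` in case the defining set is empty). -/
def gittins (M : MC S) (s : S) : ℝ := sInf {α : ℝ | M.val s α = α}

/-- The Gittins index valued in `ℝ ∪ {±∞}`, with `sInf ∅ = ⊤` representing `G(s) = ∞`. -/
def gittinsE (M : MC S) (s : S) : EReal :=
  sInf ((fun α : ℝ => (α : EReal)) '' {α : ℝ | M.val s α = α})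

/-- A non-terminal state is free if it has nonnegative reward and cannot transition
directly into the terminal set. -/
def Free (M : MC S) (s : S) : Prop :=
  s ∉ M.term ∧ 0 ≤ M.r s ∧ M.p s M.term = 0

/-- The Markov chain has no free states. -/
def NoFreeStates (M : MC S) : Prop := ∀ s : S, ¬ M.Free s

/-- The surrogate value along a path `ω`: the minimum Gittins index over the states
strictly before the hitting time of the terminal set. -/
def surrogate (M : MC S) (ω : ℕ → S) : ℝ :=
  ⨅ t : {t : ℕ // (t : ℕ∞) < hitTime M.term ω}, M.gittins (ω t.1)

end MC

end

-- ===== auxiliary development =====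
namespace MCAux
open MC
variable {S : Type*} [MeasurableSpace S]

lemma cyl_le (n : ℕ) : MC.cyl S n ≤ (inferInstance : MeasurableSpace (ℕ → S)) := by
  have : Measurable (fun (ω : ℕ → S) (i : Fin (n + 1)) => ω i) :=
    measurable_pi_lambda _ (fun i => measurable_pi_apply _)
  exact measurable_iff_comap_le.mp this

lemma stop_le_meas {τ : (ℕ → S) → ℕ∞} (hτ : MC.IsStopping S τ) (n : ℕ) :
    MeasurableSet {ω : ℕ → S | τ ω ≤ (n : ℕ∞)} := cyl_le n _ (hτ n)

lemma stop_lt_meas {τ : (ℕ → S) → ℕ∞} (hτ : MC.IsStopping S τ) (t : ℕ) :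
    MeasurableSet {ω : ℕ → S | (t : ℕ∞) < τ ω} := by
  have : {ω : ℕ → S | (t : ℕ∞) < τ ω} = {ω : ℕ → S | τ ω ≤ (t : ℕ∞)}ᶜ := by
    ext ω; simp [not_le]
  rw [this]; exact (stop_le_meas hτ t).compl

lemma stop_fin_meas {τ : (ℕ → S) → ℕ∞} (hτ : MC.IsStopping S τ) :
    MeasurableSet {ω : ℕ → S | τ ω < ⊤} := by
  have : {ω : ℕ → S | τ ω < ⊤} = ⋃ n : ℕ, {ω : ℕ → S | τ ω ≤ (n : ℕ∞)} := by
    ext ω; simp only [Set.mem_setOf_eq, Set.mem_iUnion]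
    constructor
    · intro h
      lift τ ω to ℕ using h.ne with n hn
      exact ⟨n, le_refl _⟩
    · rintro ⟨n, hn⟩; exact lt_of_le_of_lt hn (by exact_mod_cast WithTop.coe_lt_top n)
  rw [this]; exact MeasurableSet.iUnion (fun n => stop_le_meas hτ n)

omit [MeasurableSpace S] in
lemma hitTime_le_iff (A : Set S) (ω : ℕ → S) (n : ℕ) :
    hitTime A ω ≤ (n : ℕ∞) ↔ ∃ k ≤ n, ω k ∈ A := by
  constructor
  · intro h
    by_contra hc
    push_neg at hc
    have h1 : ((n + 1 : ℕ) : ℕ∞) ≤ hitTime A ω := by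
      refine le_iInf (fun t => ?_)
      have : n + 1 ≤ t.1 := by
        by_contra h'
        exact hc t.1 (by omega) t.2
      exact_mod_cast this
    have := le_trans h1 h
    exact absurd (by exact_mod_cast this : n + 1 ≤ n) (by omega)
  · rintro ⟨k, hk, hmem⟩
    exact le_trans (iInf_le _ ⟨k, hmem⟩) (by exact_mod_cast hk)

lemma hit_lt_meas (A : Set S) (hA : MeasurableSet A) (t : ℕ) :
    MeasurableSet {ω : ℕ → S | (t : ℕ∞) < hitTime A ω} := by
  have : {ω : ℕ → S | (t : ℕ∞) < hitTime A ω}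
      = (⋃ k ∈ Finset.range (t+1), (fun ω : ℕ → S => ω k) ⁻¹' A)ᶜ := by
    ext ω
    simp only [Set.mem_setOf_eq, Set.mem_compl_iff, Set.mem_iUnion, Finset.mem_range,
      Set.mem_preimage, not_exists, ← not_le, hitTime_le_iff]
    push_neg
    constructor
    · intro h k hk; exact h k (by omega)
    · intro h k hk; exact h k (by omega)
  rw [this]
  exact (MeasurableSet.iUnion fun k => MeasurableSet.iUnion fun _ =>
    (measurable_pi_apply k) hA).compl

lemma eval_meas (i : ℕ) {A : Set S} (hA : MeasurableSet A) :
    MeasurableSet {ω : ℕ → S | ω i ∈ A} := by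
  exact (measurable_pi_apply i) hA

lemma eval_nmem_meas (i : ℕ) {A : Set S} (hA : MeasurableSet A) :
    MeasurableSet {ω : ℕ → S | ω i ∉ A} := by
  have : {ω : ℕ → S | ω i ∉ A} = (fun ω : ℕ → S => ω i) ⁻¹' Aᶜ := rfl
  rw [this]; exact (measurable_pi_apply i) hA.compl

lemma map_bind' {α β γ : Type*} [MeasurableSpace α] [MeasurableSpace β] [MeasurableSpace γ]
    (m : Measure α) {f : α → Measure β} (hf : Measurable f) {g : β → γ} (hg : Measurable g) :
    (m.bind f).map g = m.bind (fun a => (f a).map g) := by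
  ext A hA
  have hm : Measurable fun a => (f a).map g := (Measure.measurable_map g hg).comp hf
  rw [Measure.map_apply hg hA, Measure.bind_apply (hg hA) hf.aemeasurable, Measure.bind_apply hA hm.aemeasurable]
  refine lintegral_congr (fun a => ?_)
  rw [Measure.map_apply hg hA]

lemma shift_law (M : MC S) (s : S) (n : ℕ) :
    ∃ ν : Measure S, (M.traj s).map (fun ω k => ω (k + n)) = ν.bind M.traj := by
  induction n with
  | zero =>
    refine ⟨Measure.dirac s, ?_⟩
    have h1 : (fun (ω : ℕ → S) k => ω (k + 0)) = id := by funext ω k; simp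
    rw [h1, Measure.map_id, Measure.dirac_bind M.traj_meas]
  | succ n ih =>
    obtain ⟨ν, hν⟩ := ih
    refine ⟨ν.bind M.p, ?_⟩
    have hshift : Measurable (fun (ω : ℕ → S) k => ω (k + 1)) :=
      measurable_pi_lambda _ (fun k => measurable_pi_apply _)
    have hshiftn : Measurable (fun (ω : ℕ → S) k => ω (k + n)) :=
      measurable_pi_lambda _ (fun k => measurable_pi_apply _)
    have hcomp : (fun (ω : ℕ → S) k => ω (k + (n+1))) =
        (fun (ω : ℕ → S) k => ω (k + 1)) ∘ (fun (ω : ℕ → S) k => ω (k + n)) := by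
      funext ω k; simp [Function.comp]; ring_nf
    rw [hcomp, ← Measure.map_map hshift hshiftn, hν, map_bind' ν M.traj_meas hshift]
    have : (fun x => (M.traj x).map (fun ω k => ω (k + 1))) = fun x => (M.p x).bind M.traj := by
      funext x; exact M.traj_markov x
    rw [this, ← Measure.bind_bind M.p_meas.aemeasurable M.traj_meas.aemeasurable]

lemma eval0_null (M : MC S) (x : S) {A : Set S} (hx : x ∉ A) :
    M.traj x {ω : ℕ → S | ω 0 ∈ A} = 0 := by
  refine measure_mono_null (fun ω hω => ?_) (ae_iff.mp (M.traj_zero x))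
  simp only [Set.mem_setOf_eq] at hω ⊢
  intro h0; rw [h0] at hω; exact hx hω

lemma B0_null (M : MC S) (x : S) :
    M.traj x {ω : ℕ → S | ω 0 ∈ M.term ∧ ω 1 ∉ M.term} = 0 := by
  by_cases hx : x ∈ M.term
  · have h2 : M.traj x {ω : ℕ → S | ω 1 ∉ M.term} = 0 := by
      have hset : {ω : ℕ → S | ω 1 ∉ M.term}
          = (fun (ω : ℕ → S) k => ω (k + 1)) ⁻¹' {ω : ℕ → S | ω 0 ∉ M.term} := rfl
      have hshift : Measurable (fun (ω : ℕ → S) k => ω (k + 1)) :=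
        measurable_pi_lambda _ (fun k => measurable_pi_apply _)
      have hms : MeasurableSet {ω : ℕ → S | ω 0 ∉ M.term} := eval_nmem_meas 0 M.term_meas
      rw [hset, ← Measure.map_apply hshift hms, M.traj_markov x, M.absorbing x hx,
        Measure.bind_apply hms M.traj_meas.aemeasurable]
      have hint : Measurable (fun y => M.traj y {ω : ℕ → S | ω 0 ∉ M.term}) :=
        (Measure.measurable_coe hms).comp M.traj_meas
      rw [lintegral_dirac' x hint]
      exact eval0_null M x (A := M.termᶜ) (by simp [hx])
    exact measure_mono_null (fun ω hω => hω.2) h2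
  · exact measure_mono_null (fun ω hω => hω.1) (eval0_null M x hx)

lemma absorb_ae (M : MC S) (s : S) :
    ∀ᵐ ω ∂ M.traj s, ∀ n : ℕ, ω n ∈ M.term → ω (n+1) ∈ M.term := by
  rw [ae_all_iff]
  intro n
  rw [ae_iff]
  have hset : {ω : ℕ → S | ¬ (ω n ∈ M.term → ω (n+1) ∈ M.term)}
      = (fun (ω : ℕ → S) k => ω (k + n)) ⁻¹' {ω : ℕ → S | ω 0 ∈ M.term ∧ ω 1 ∉ M.term} := by
    ext ω
    have e0 : 0 + n = n := by omega
    have e1 : 1 + n = n + 1 := by omega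
    simp only [Set.mem_setOf_eq, Set.mem_preimage, Classical.not_imp, e0, e1]
  obtain ⟨ν, hν⟩ := shift_law M s n
  have hshiftn : Measurable (fun (ω : ℕ → S) k => ω (k + n)) :=
    measurable_pi_lambda _ (fun k => measurable_pi_apply _)
  have hB0 : MeasurableSet {ω : ℕ → S | ω 0 ∈ M.term ∧ ω 1 ∉ M.term} :=
    (eval_meas 0 M.term_meas).inter (eval_nmem_meas 1 M.term_meas)
  rw [hset, ← Measure.map_apply hshiftn hB0, hν, Measure.bind_apply hB0 M.traj_meas.aemeasurable]
  have : ∀ x, M.traj x {ω : ℕ → S | ω 0 ∈ M.term ∧ ω 1 ∉ M.term} = 0 := B0_null M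
  simp [this]

lemma term_after_hit (M : MC S) (s : S) :
    ∀ᵐ ω ∂ M.traj s, ∀ t : ℕ, hitTime M.term ω ≤ (t : ℕ∞) → ω t ∈ M.term := by
  filter_upwards [absorb_ae M s] with ω habs
  intro t ht
  obtain ⟨k, hk, hmem⟩ := (hitTime_le_iff M.term ω t).mp ht
  have key : ∀ m : ℕ, ω (k + m) ∈ M.term := by
    intro m
    induction m with
    | zero => simpa using hmem
    | succ m ih => exact habs (k + m) ih
  have : t = k + (t - k) := by omega
  rw [this]; exact key (t - k)

end MCAux

noncomputable section
namespace MCAux2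
open MCAux Filter
variable {S : Type*} [MeasurableSpace S]

def Hfun (M : MC S) (ω : ℕ → S) : ℝ≥0∞ :=
  ∑' t : ℕ, if (t : ℕ∞) < hitTime M.term ω then ENNReal.ofReal |M.r (ω t)| else 0

lemma Hfun_meas (M : MC S) : Measurable (Hfun M) :=
  Measurable.ennreal_tsum fun t => Measurable.ite (hit_lt_meas M.term M.term_meas t)
    (ENNReal.measurable_ofReal.comp ((M.r_meas.comp (measurable_pi_apply t)).abs))
    measurable_const

lemma g_int (M : MC S) (s : S) : Integrable (fun ω => (Hfun M ω).toReal) (M.traj s) :=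
  integrable_toReal_of_lintegral_ne_top (Hfun_meas M).aemeasurable (M.rwd_int s).ne

def fpart (M : MC S) (τ : (ℕ → S) → ℕ∞) (ω : ℕ → S) : ℝ :=
  ∑' t : ℕ, if (t : ℕ∞) < τ ω then M.r (ω t) else 0

def chi (τ : (ℕ → S) → ℕ∞) (ω : ℕ → S) : ℝ := if τ ω < ⊤ then 1 else 0

lemma payoff_eq (M : MC S) (α : ℝ) (τ : (ℕ → S) → ℕ∞) :
    M.payoff α τ = fun ω => fpart M τ ω + α * chi τ ω := rfl

lemma fpart_ae (M : MC S) (s : S) (τ : (ℕ → S) → ℕ∞) :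
    ∀ᵐ ω ∂ M.traj s, |fpart M τ ω| ≤ (Hfun M ω).toReal ∧
      Tendsto (fun n => ∑ t ∈ Finset.range n, if (t : ℕ∞) < τ ω then M.r (ω t) else 0)
        atTop (nhds (fpart M τ ω)) := by
  filter_upwards [M.hit_fin s, term_after_hit M s,
    ae_lt_top (Hfun_meas M) (M.rwd_int s).ne] with ω hfin hterm hH
  set N : ℕ := (hitTime M.term ω).toNat with hNdef
  have hNeq : ((N : ℕ∞)) = hitTime M.term ω := ENat.coe_toNat hfin.ne
  have hzero : ∀ t, t ∉ Finset.range N → (if (t : ℕ∞) < τ ω then M.r (ω t) else 0) = 0 := by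
    intro t ht
    have htN : N ≤ t := Nat.le_of_not_lt (by simpa [Finset.mem_range] using ht)
    have hle : hitTime M.term ω ≤ (t : ℕ∞) := by rw [← hNeq]; exact_mod_cast htN
    have hr : M.r (ω t) = 0 := M.r_term _ (hterm t hle)
    simp [hr]
  have hsum : fpart M τ ω
      = ∑ t ∈ Finset.range N, (if (t : ℕ∞) < τ ω then M.r (ω t) else 0) :=
    tsum_eq_sum hzero
  constructor
  · rw [hsum]
    have step1 : |∑ t ∈ Finset.range N, (if (t : ℕ∞) < τ ω then M.r (ω t) else 0)|
        ≤ ∑ t ∈ Finset.range N, |M.r (ω t)| := by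
      refine le_trans (Finset.abs_sum_le_sum_abs _ _) (Finset.sum_le_sum fun t _ => ?_)
      split
      · exact le_refl _
      · simp [abs_nonneg]
    refine le_trans step1 ?_
    have h1 : ENNReal.ofReal (∑ t ∈ Finset.range N, |M.r (ω t)|) ≤ Hfun M ω := by
      rw [ENNReal.ofReal_sum_of_nonneg (fun t _ => abs_nonneg _)]
      refine le_trans (le_of_eq (Finset.sum_congr rfl fun t ht => ?_)) (ENNReal.sum_le_tsum _)
      have hlt : (t : ℕ∞) < hitTime M.term ω := by
        rw [← hNeq]; exact_mod_cast Finset.mem_range.mp ht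
      simp [hlt]
    calc ∑ t ∈ Finset.range N, |M.r (ω t)|
        = (ENNReal.ofReal (∑ t ∈ Finset.range N, |M.r (ω t)|)).toReal :=
          (ENNReal.toReal_ofReal (Finset.sum_nonneg fun t _ => abs_nonneg _)).symm
      _ ≤ (Hfun M ω).toReal := ENNReal.toReal_mono hH.ne h1
  · refine Tendsto.congr' ?_ tendsto_const_nhds
    rw [Filter.EventuallyEq, eventually_atTop]
    refine ⟨N, fun n hn => ?_⟩
    rw [hsum]
    exact Finset.sum_subset (Finset.range_subset_range.mpr hn) (fun t _ ht => hzero t ht)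

lemma fpart_int (M : MC S) (s : S) {τ : (ℕ → S) → ℕ∞} (hτ : MC.IsStopping S τ) :
    Integrable (fpart M τ) (M.traj s) := by
  have hae := fpart_ae M s τ
  have hpmeas : ∀ n : ℕ, Measurable (fun ω : ℕ → S =>
      ∑ t ∈ Finset.range n, if (t : ℕ∞) < τ ω then M.r (ω t) else 0) := by
    intro n
    refine Finset.measurable_sum _ (fun t _ => ?_)
    exact Measurable.ite (stop_lt_meas hτ t) (M.r_meas.comp (measurable_pi_apply t))
      measurable_const
  have hmeas : AEStronglyMeasurable (fpart M τ) (M.traj s) := by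
    have := aemeasurable_of_tendsto_metrizable_ae atTop
      (fun n => (hpmeas n).aemeasurable) (hae.mono fun ω h => h.2)
    exact this.aestronglyMeasurable
  refine Integrable.mono' (g_int M s) hmeas (hae.mono fun ω h => ?_)
  simpa [Real.norm_eq_abs] using h.1

lemma fpart_le (M : MC S) (s : S) {τ : (ℕ → S) → ℕ∞} (hτ : MC.IsStopping S τ) :
    ∫ ω, fpart M τ ω ∂ M.traj s ≤ ∫ ω, (Hfun M ω).toReal ∂ M.traj s :=
  integral_mono_ae (fpart_int M s hτ) (g_int M s)
    ((fpart_ae M s τ).mono fun ω h => le_trans (le_abs_self _) h.1)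

lemma chi_meas {τ : (ℕ → S) → ℕ∞} (hτ : MC.IsStopping S τ) : Measurable (chi τ) :=
  Measurable.ite (stop_fin_meas hτ) measurable_const measurable_const

lemma chi_int (M : MC S) (s : S) {τ : (ℕ → S) → ℕ∞} (hτ : MC.IsStopping S τ) :
    Integrable (chi τ) (M.traj s) := by
  haveI := M.traj_prob s
  refine Integrable.mono' (integrable_const 1) (chi_meas hτ).aestronglyMeasurable
    (Filter.Eventually.of_forall fun ω => ?_)
  unfold chi; split <;> simp

lemma chi_nonneg (M : MC S) (s : S) {τ : (ℕ → S) → ℕ∞} (hτ : MC.IsStopping S τ) :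
    0 ≤ ∫ ω, chi τ ω ∂ M.traj s := by
  refine integral_nonneg fun ω => ?_
  unfold chi; split <;> norm_num

lemma chi_le_one (M : MC S) (s : S) {τ : (ℕ → S) → ℕ∞} (hτ : MC.IsStopping S τ) :
    ∫ ω, chi τ ω ∂ M.traj s ≤ 1 := by
  haveI := M.traj_prob s
  calc ∫ ω, chi τ ω ∂ M.traj s ≤ ∫ _ω, (1:ℝ) ∂ M.traj s := by
        refine integral_mono (chi_int M s hτ) (integrable_const 1) (fun ω => ?_)
        unfold chi; split <;> norm_num
    _ = 1 := by simp

lemma payoff_integral (M : MC S) (s : S) {τ : (ℕ → S) → ℕ∞} (hτ : MC.IsStopping S τ) (α : ℝ) :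
    ∫ ω, M.payoff α τ ω ∂ M.traj s
      = (∫ ω, fpart M τ ω ∂ M.traj s) + α * ∫ ω, chi τ ω ∂ M.traj s := by
  rw [payoff_eq]
  rw [integral_add (fpart_int M s hτ) ((chi_int M s hτ).const_mul α), integral_const_mul]

end MCAux2
end

section DerivAux
open Filter Topology Set

lemma aux_deriv_right (f : ℝ → ℝ) (hconv : ConvexOn ℝ Set.univ f)
    (hlip : ∀ a b : ℝ, a ≤ b → 0 ≤ f b - f a ∧ f b - f a ≤ b - a) (α : ℝ) :
    ∃ d ∈ Set.Icc (0:ℝ) 1, HasDerivWithinAt f d (Set.Ici α) α := by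
  have hmem : ∀ y ∈ Ioi α, slope f α y ∈ Set.Icc (0:ℝ) 1 := by
    intro y hy
    have hy' : (0:ℝ) < y - α := by simpa using sub_pos.mpr (mem_Ioi.mp hy)
    obtain ⟨h1, h2⟩ := hlip α y (le_of_lt hy)
    rw [slope_def_field]
    constructor
    · exact div_nonneg h1 hy'.le
    · rw [div_le_one hy']; exact h2
  have hmono : MonotoneOn (slope f α) (Ioi α) := by
    intro x hx y hy hxy
    rw [slope_def_field, slope_def_field]
    exact hconv.secant_mono (mem_univ _) (mem_univ _) (mem_univ _)
      (ne_of_gt hx) (ne_of_gt hy) hxy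
  have hbdd : BddBelow (slope f α '' Ioi α) := ⟨0, by rintro _ ⟨y, hy, rfl⟩; exact (hmem y hy).1⟩
  have hne : (slope f α '' Ioi α).Nonempty := ⟨_, ⟨α + 1, by simp, rfl⟩⟩
  refine ⟨sInf (slope f α '' Ioi α), ⟨?_, ?_⟩, ?_⟩
  · exact le_csInf hne (by rintro _ ⟨y, hy, rfl⟩; exact (hmem y hy).1)
  · exact csInf_le_of_le hbdd ⟨α + 1, by simp, rfl⟩ (hmem (α+1) (by simp)).2
  · rw [hasDerivWithinAt_iff_tendsto_slope, Set.Ici_sdiff_left]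
    exact hmono.tendsto_nhdsGT hbdd

lemma aux_deriv_left (f : ℝ → ℝ) (hconv : ConvexOn ℝ Set.univ f)
    (hlip : ∀ a b : ℝ, a ≤ b → 0 ≤ f b - f a ∧ f b - f a ≤ b - a) (α : ℝ) :
    ∃ d ∈ Set.Icc (0:ℝ) 1, HasDerivWithinAt f d (Set.Iic α) α := by
  have hmem : ∀ y ∈ Iio α, slope f α y ∈ Set.Icc (0:ℝ) 1 := by
    intro y hy
    have hy' : (0:ℝ) < α - y := by simpa using sub_pos.mpr (mem_Iio.mp hy)
    obtain ⟨h1, h2⟩ := hlip y α (le_of_lt hy)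
    rw [slope_def_field]
    have heq : (f y - f α) / (y - α) = (f α - f y) / (α - y) := by
      rw [← neg_div_neg_eq]; ring_nf
    rw [heq]
    constructor
    · exact div_nonneg h1 hy'.le
    · rw [div_le_one hy']; exact h2
  have hmono : MonotoneOn (slope f α) (Iio α) := by
    intro x hx y hy hxy
    rw [slope_def_field, slope_def_field]
    exact hconv.secant_mono (mem_univ _) (mem_univ _) (mem_univ _)
      (ne_of_lt hx) (ne_of_lt hy) hxy
  have hbdd : BddAbove (slope f α '' Iio α) := ⟨1, by rintro _ ⟨y, hy, rfl⟩; exact (hmem y hy).2⟩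
  have hne : (slope f α '' Iio α).Nonempty := ⟨_, ⟨α - 1, by simp, rfl⟩⟩
  refine ⟨sSup (slope f α '' Iio α), ⟨?_, ?_⟩, ?_⟩
  · exact le_csSup_of_le hbdd ⟨α - 1, by simp, rfl⟩ (hmem (α-1) (by simp)).1
  · exact csSup_le hne (by rintro _ ⟨y, hy, rfl⟩; exact (hmem y hy).2)
  · rw [hasDerivWithinAt_iff_tendsto_slope, Set.Iic_diff_right]
    exact hmono.tendsto_nhdsLT hbdd

end DerivAux


/-!
STATEMENT 9: For every state `s` of a Markov chain with rewards satisfying the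
finite-termination and integrability assumption, `α ↦ V*(s; α)` is convex and
nondecreasing; `0 ≤ V*(s; β) − V*(s; α) ≤ β − α` for `α ≤ β`, so its one-sided derivatives
exist everywhere with values in `[0,1]`; and `V*(s; α) ≥ α` for all `α`.
-/
theorem stmt9 {S : Type*} [MeasurableSpace S] (M : MC S) (s : S) :
    ConvexOn ℝ Set.univ (M.val s) ∧ Monotone (M.val s) ∧
    (∀ α β : ℝ, α ≤ β → 0 ≤ M.val s β - M.val s α ∧ M.val s β - M.val s α ≤ β - α) ∧
    (∀ α : ℝ, ∃ d ∈ Set.Icc (0 : ℝ) 1, HasDerivWithinAt (M.val s) d (Set.Ici α) α) ∧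
    (∀ α : ℝ, ∃ d ∈ Set.Icc (0 : ℝ) 1, HasDerivWithinAt (M.val s) d (Set.Iic α) α) ∧
    (∀ α : ℝ, α ≤ M.val s α) := by
  classical
  haveI := M.traj_prob s
  open MCAux MCAux2 in
  -- the trivial stopping time
  have hstop0 : MC.IsStopping S (fun _ : ℕ → S => (0:ℕ∞)) := by
    intro n
    have huniv : {ω : ℕ → S | (0:ℕ∞) ≤ (n:ℕ∞)} = Set.univ := by
      ext ω; simp
    rw [huniv]
    exact MeasurableSet.univ
  haveI hNE : Nonempty {τ : (ℕ → S) → ℕ∞ // MC.IsStopping S τ} := ⟨⟨_, hstop0⟩⟩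
  set C : ℝ := ∫ ω, (MCAux2.Hfun M ω).toReal ∂ M.traj s with hC
  have hdecomp : ∀ (τ : {τ : (ℕ → S) → ℕ∞ // MC.IsStopping S τ}) (α : ℝ),
      ∫ ω, M.payoff α τ.1 ω ∂ M.traj s
        = (∫ ω, MCAux2.fpart M τ.1 ω ∂ M.traj s) + α * ∫ ω, MCAux2.chi τ.1 ω ∂ M.traj s :=
    fun τ α => MCAux2.payoff_integral M s τ.2 α
  have hb0 : ∀ (τ : {τ : (ℕ → S) → ℕ∞ // MC.IsStopping S τ}),
      0 ≤ ∫ ω, MCAux2.chi τ.1 ω ∂ M.traj s := fun τ => MCAux2.chi_nonneg M s τ.2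
  have hb1 : ∀ (τ : {τ : (ℕ → S) → ℕ∞ // MC.IsStopping S τ}),
      ∫ ω, MCAux2.chi τ.1 ω ∂ M.traj s ≤ 1 := fun τ => MCAux2.chi_le_one M s τ.2
  have hfC : ∀ (τ : {τ : (ℕ → S) → ℕ∞ // MC.IsStopping S τ}),
      ∫ ω, MCAux2.fpart M τ.1 ω ∂ M.traj s ≤ C := fun τ => MCAux2.fpart_le M s τ.2
  have hBdd : ∀ α : ℝ, BddAbove (Set.range
      (fun τ : {τ : (ℕ → S) → ℕ∞ // MC.IsStopping S τ} => ∫ ω, M.payoff α τ.1 ω ∂ M.traj s)) := by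
    intro α
    refine ⟨C + |α|, ?_⟩
    rintro _ ⟨τ, rfl⟩
    show ∫ ω, M.payoff α τ.1 ω ∂ M.traj s ≤ C + |α|
    rw [hdecomp]
    have h1 := hb0 τ; have h2 := hb1 τ; have h3 := hfC τ
    nlinarith [le_abs_self α, neg_abs_le α, abs_nonneg α]
  have hval : ∀ α : ℝ, M.val s α = ⨆ τ : {τ : (ℕ → S) → ℕ∞ // MC.IsStopping S τ},
      ∫ ω, M.payoff α τ.1 ω ∂ M.traj s := fun α => rfl
  -- value of the trivial stopping time
  have hτ0 : ∀ α : ℝ, ∫ ω, M.payoff α (fun _ => (0:ℕ∞)) ω ∂ M.traj s = α := by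
    intro α
    have hpay : M.payoff α (fun _ => (0:ℕ∞)) = fun _ => α := by
      funext ω
      have h0 : ∀ t : ℕ, ¬ ((t:ℕ∞) < (0:ℕ∞)) := fun t => not_lt_of_ge (zero_le (a := (t:ℕ∞)))
      have htop : (0:ℕ∞) < ⊤ := by simp
      simp [MC.payoff, h0, htop, tsum_zero]
    rw [hpay]
    simp
  have hge : ∀ α : ℝ, α ≤ M.val s α := by
    intro α
    rw [hval]
    have := le_ciSup (hBdd α) (⟨_, hstop0⟩ : {τ : (ℕ → S) → ℕ∞ // MC.IsStopping S τ})
    rwa [hτ0 α] at this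
  have hlip : ∀ α β : ℝ, α ≤ β → 0 ≤ M.val s β - M.val s α ∧ M.val s β - M.val s α ≤ β - α := by
    intro α β hab
    constructor
    · rw [sub_nonneg, hval, hval]
      refine ciSup_mono (hBdd β) (fun τ => ?_)
      rw [hdecomp, hdecomp]
      have h1 := hb0 τ
      nlinarith
    · rw [sub_le_iff_le_add, hval β]
      refine ciSup_le (fun τ => ?_)
      have hτα : ∫ ω, M.payoff α τ.1 ω ∂ M.traj s ≤ M.val s α := le_ciSup (hBdd α) τ
      rw [hdecomp] at hτα ⊢
      have h1 := hb0 τ; have h2 := hb1 τ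
      nlinarith
  have hmono : Monotone (M.val s) := fun α β h => by
    have := (hlip α β h).1; linarith
  have hconv : ConvexOn ℝ Set.univ (M.val s) := by
    refine ⟨convex_univ, fun x _ y _ a b ha hb hab => ?_⟩
    simp only [smul_eq_mul]
    rw [hval]
    refine ciSup_le (fun τ => ?_)
    have hx : ∫ ω, M.payoff x τ.1 ω ∂ M.traj s ≤ M.val s x := le_ciSup (hBdd x) τ
    have hy : ∫ ω, M.payoff y τ.1 ω ∂ M.traj s ≤ M.val s y := le_ciSup (hBdd y) τ
    rw [hdecomp] at hx hy ⊢
    set F := ∫ ω, MCAux2.fpart M τ.1 ω ∂ M.traj s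
    set c := ∫ ω, MCAux2.chi τ.1 ω ∂ M.traj s
    have e : F + (a*x+b*y)*c = a*(F + x*c) + b*(F + y*c) := by
      have hb' : b = 1 - a := by linarith
      rw [hb']; ring
    rw [e]
    exact add_le_add (mul_le_mul_of_nonneg_left hx ha) (mul_le_mul_of_nonneg_left hy hb)
  exact ⟨hconv, hmono, hlip, fun α => aux_deriv_right _ hconv hlip α,
    fun α => aux_deriv_left _ hconv hlip α, hge⟩
end
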